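/- arXiv:1704.07865 — 3 statements merged into one kernel-verified Lean document; each statement's English description precedes it below -/
import Mathlib

section
/- Let p = (p_1,…,p_M) and q = (q_1,…,q_M) be vectors with strictly positive entries satisfying Σ_{m=1}^M p_m = Σ_{m=1}^M q_m. Then lim_{β→0⁺} d_β(p,q) = d_KL(p,q), i.e., the density power divergence tends to the Kullback–Leibler divergence as the tuning parameter β tends to 0 from the right. -/
open Real BigOperators Finset Filter

lemma rpow_sub_one_div_tendsto {x : ℝ} (hx : 0 < x) :
    Tendsto (fun β : ℝ => (x ^ β - 1) / β) (nhdsWithin 0 (Set.Ioi 0))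
      (nhds (Real.log x)) := by
  have hd : HasDerivAt (fun y : ℝ => x ^ y) (Real.log x) 0 := by
    simpa using (Real.hasStrictDerivAt_const_rpow hx 0).hasDerivAt
  have := hasDerivAt_iff_tendsto_slope.mp hd
  have hle : nhdsWithin (0:ℝ) (Set.Ioi 0) ≤ nhdsWithin 0 {0}ᶜ :=
    nhdsWithin_mono _ (fun y hy => ne_of_gt hy)
  refine (this.mono_left hle).congr ?_
  intro β
  simp [slope_def_field, Real.rpow_zero, div_eq_inv_mul]

lemma qbeta_tendsto {x : ℝ} (hx : 0 < x) :
    Tendsto (fun β : ℝ => x ^ β) (nhdsWithin 0 (Set.Ioi 0)) (nhds 1) := by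
  have : ContinuousAt (fun β : ℝ => x ^ β) 0 :=
    Real.continuousAt_const_rpow hx.ne'
  simpa [Real.rpow_zero] using this.tendsto.mono_left nhdsWithin_le_nhds

/-- for vectors with strictly positive entries and equal total mass,
the density power divergence `d_β(p,q)` tends to the Kullback–Leibler divergence
`d_KL(p,q)` as `β → 0⁺`. -/
theorem dpd_tendsto_kl (M : ℕ) (p q : Fin M → ℝ)
    (hp : ∀ m, 0 < p m) (hq : ∀ m, 0 < q m)
    (hsum : ∑ m, p m = ∑ m, q m) :
    Tendsto
      (fun β : ℝ => ∑ m,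
        (q m ^ (β + 1) - (1 + 1 / β) * q m ^ β * p m + (1 / β) * p m ^ (1 + β)))
      (nhdsWithin 0 (Set.Ioi 0))
      (nhds (∑ m, p m * Real.log (p m / q m))) := by
  have key : ∀ m, Tendsto
      (fun β : ℝ => q m ^ (β + 1) - (1 + 1 / β) * q m ^ β * p m + (1 / β) * p m ^ (1 + β))
      (nhdsWithin 0 (Set.Ioi 0))
      (nhds (q m - p m + p m * Real.log (p m / q m))) := by
    intro m
    have hpm := hp m; have hqm := hq m
    have h1 : Tendsto (fun β : ℝ => q m ^ (β + 1)) (nhdsWithin 0 (Set.Ioi 0)) (nhds (q m)) := by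
      have := (qbeta_tendsto hqm).mul (tendsto_const_nhds (x := q m))
      refine Tendsto.congr (f₁ := fun β => q m ^ β * q m) ?_ (by simpa using this)
      intro β
      rw [Real.rpow_add hqm, Real.rpow_one]
    have h2 : Tendsto (fun β : ℝ => q m ^ β * p m) (nhdsWithin 0 (Set.Ioi 0)) (nhds (p m)) := by
      simpa using (qbeta_tendsto hqm).mul (tendsto_const_nhds (x := p m))
    have h3 : Tendsto (fun β : ℝ => p m * ((p m ^ β - 1) / β - (q m ^ β - 1) / β))
        (nhdsWithin 0 (Set.Ioi 0))
        (nhds (p m * Real.log (p m / q m))) := by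
      have := ((rpow_sub_one_div_tendsto hpm).sub (rpow_sub_one_div_tendsto hqm)).const_mul (p m)
      rwa [← Real.log_div hpm.ne' hqm.ne'] at this
    have hcomb := (h1.sub h2).add h3
    refine hcomb.congr' ?_
    filter_upwards [self_mem_nhdsWithin] with β (hβ : 0 < β)
    have hβ0 : β ≠ 0 := hβ.ne'
    have hpe : p m ^ (1 + β) = p m * p m ^ β := by
      rw [Real.rpow_add hpm, Real.rpow_one]
    rw [hpe]
    field_simp [hpe]
    ring
  have total := tendsto_finset_sum Finset.univ (fun m _ => key m)
  have heq : ∑ m, (q m - p m + p m * Real.log (p m / q m))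
      = ∑ m, p m * Real.log (p m / q m) := by
    rw [Finset.sum_add_distrib, Finset.sum_sub_distrib, ← hsum]
    ring
  rwa [heq] at total
end

section
/- Fix β > 0 and data n_{ij} ∈ {0,…,K}, and write π_{ij}(α) = F_{ij}(α). Define D(α) = (1/(IJ))·Σ_{i=1}^I Σ_{j=1}^J [π_{ij}(α)^{β+1} + (1 − π_{ij}(α))^{β+1} − ((1+β)/β)·((n_{ij}/K)·π_{ij}(α)^β + ((K − n_{ij})/K)·(1 − π_{ij}(α))^β)]. Then for every α = (α₀, α₁) with α₀ > 0, IJ·D(α) = (IJ)^{β+1}·d_β(p̂, p(α)) − (1/β)·Σ_{i=1}^I Σ_{j=1}^J [(n_{ij}/K)^{1+β} + ((K − n_{ij})/K)^{1+β}]; consequently, a parameter α with α₀ > 0 minimizes D over {α : α₀ > 0} if and only if it minimizes α ↦ d_β(p̂, p(α)) over the same set. -/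
open Real BigOperators Finset

/-- Lifetime CDF in the one-shot device exponential model. -/
noncomputable def Fcdf (α0 α1 w t : ℝ) : ℝ :=
  1 - Real.exp (-(α0 * Real.exp (α1 * w) * t))

/-- Density power divergence with tuning parameter `β > 0`. -/
noncomputable def dPD (β : ℝ) {M : Type*} [Fintype M] (p q : M → ℝ) : ℝ :=
  ∑ m, (q m ^ (β + 1) - (1 + 1 / β) * q m ^ β * p m + (1 / β) * p m ^ (1 + β))

/-- Theoretical probability vector `p(α)`. -/
noncomputable def pth (I J : ℕ) (w : Fin I → ℝ) (t : Fin J → ℝ) (α0 α1 : ℝ) :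
    Fin I × Fin J × Fin 2 → ℝ :=
  fun x =>
    if x.2.2 = 0 then Fcdf α0 α1 (w x.1) (t x.2.1) / (I * J)
    else (1 - Fcdf α0 α1 (w x.1) (t x.2.1)) / (I * J)

/-- Observed probability vector `p̂`. -/
noncomputable def phat (I J K : ℕ) (n : Fin I → Fin J → ℕ) :
    Fin I × Fin J × Fin 2 → ℝ :=
  fun x =>
    if x.2.2 = 0 then (n x.1 x.2.1 : ℝ) / (I * J * K)
    else ((K : ℝ) - (n x.1 x.2.1 : ℝ)) / (I * J * K)

/-- The simplified MDPDE objective `D(α)` of Definition 3 / display (4b). -/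
noncomputable def Dobj (I J K : ℕ) (w : Fin I → ℝ) (t : Fin J → ℝ)
    (n : Fin I → Fin J → ℕ) (β α0 α1 : ℝ) : ℝ :=
  (1 / (I * J : ℝ)) * ∑ i, ∑ j,
    (Fcdf α0 α1 (w i) (t j) ^ (β + 1) + (1 - Fcdf α0 α1 (w i) (t j)) ^ (β + 1)
      - ((1 + β) / β) *
        (((n i j : ℝ) / K) * Fcdf α0 α1 (w i) (t j) ^ β
          + (((K : ℝ) - (n i j : ℝ)) / K) * (1 - Fcdf α0 α1 (w i) (t j)) ^ β))


lemma aux_Fcdf_nonneg {α0 α1 w t : ℝ} (hα0 : 0 < α0) (ht : 0 < t) : 0 ≤ Fcdf α0 α1 w t := by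
  have hx : -(α0 * Real.exp (α1 * w) * t) ≤ 0 := by
    have : 0 < α0 * Real.exp (α1 * w) * t := by positivity
    linarith
  have := Real.exp_le_one_iff.mpr hx
  unfold Fcdf; linarith

lemma aux_Fcdf_le_one (α0 α1 w t : ℝ) : Fcdf α0 α1 w t ≤ 1 := by
  have := Real.exp_pos (-(α0 * Real.exp (α1 * w) * t))
  unfold Fcdf; linarith

lemma aux_key (β c Kr F nn : ℝ) (hβ : 0 < β) (hc : 0 < c) (hK : 0 < Kr)
    (hF : 0 ≤ F) (hF1 : F ≤ 1) (hn0 : 0 ≤ nn) (hnK : nn ≤ Kr) :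
    c ^ (β + 1) *
      ((F / c) ^ (β + 1) - (1 + 1 / β) * (F / c) ^ β * (nn / (c * Kr))
        + (1 / β) * (nn / (c * Kr)) ^ (1 + β)
      + (((1 - F) / c) ^ (β + 1) - (1 + 1 / β) * ((1 - F) / c) ^ β * ((Kr - nn) / (c * Kr))
        + (1 / β) * ((Kr - nn) / (c * Kr)) ^ (1 + β)))
    = (F ^ (β + 1) + (1 - F) ^ (β + 1)
        - ((1 + β) / β) * ((nn / Kr) * F ^ β + ((Kr - nn) / Kr) * (1 - F) ^ β))
      + (1 / β) * ((nn / Kr) ^ (1 + β) + ((Kr - nn) / Kr) ^ (1 + β)) := by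
  have h1F : (0:ℝ) ≤ 1 - F := by linarith
  have hKn : (0:ℝ) ≤ Kr - nn := by linarith
  rw [show nn / (c * Kr) = (nn / Kr) / c by ring,
      show (Kr - nn) / (c * Kr) = ((Kr - nn) / Kr) / c by ring]
  simp only [Real.div_rpow hF hc.le, Real.div_rpow h1F hc.le,
    Real.div_rpow (div_nonneg hn0 hK.le) hc.le, Real.div_rpow (div_nonneg hKn hK.le) hc.le]
  have e1 : c ^ (β + 1) = c ^ β * c := by rw [Real.rpow_add hc, Real.rpow_one]
  have e2 : c ^ (1 + β) = c * c ^ β := by rw [Real.rpow_add hc, Real.rpow_one]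
  have hcβ : c ^ β ≠ 0 := (Real.rpow_pos_of_pos hc β).ne'
  rw [e1, e2]
  field_simp
  ring

/-- `IJ·D(α) = (IJ)^{β+1} d_β(p̂,p(α)) − (1/β) Σ[(n/K)^{1+β} + ((K−n)/K)^{1+β}]`,
hence minimizing `D` over `{α₀ > 0}` is equivalent to minimizing `α ↦ d_β(p̂, p(α))`. -/
theorem Dobj_vs_dpd (I J K : ℕ) (hI : 1 ≤ I) (hJ : 1 ≤ J) (hK : 1 ≤ K)
    (w : Fin I → ℝ) (t : Fin J → ℝ) (hw : ∀ i, 0 < w i) (ht : ∀ j, 0 < t j)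
    (n : Fin I → Fin J → ℕ) (hn : ∀ i j, n i j ≤ K)
    (β : ℝ) (hβ : 0 < β) :
    (∀ α0 α1 : ℝ, 0 < α0 →
      (I * J : ℝ) * Dobj I J K w t n β α0 α1 =
        (I * J : ℝ) ^ (β + 1) * dPD β (phat I J K n) (pth I J w t α0 α1)
          - (1 / β) * ∑ i, ∑ j,
              (((n i j : ℝ) / K) ^ (1 + β) + (((K : ℝ) - (n i j : ℝ)) / K) ^ (1 + β)))
    ∧
    (∀ α0 α1 : ℝ, 0 < α0 →
      ((∀ α0' α1' : ℝ, 0 < α0' → Dobj I J K w t n β α0 α1 ≤ Dobj I J K w t n β α0' α1')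
        ↔
       (∀ α0' α1' : ℝ, 0 < α0' →
          dPD β (phat I J K n) (pth I J w t α0 α1) ≤
            dPD β (phat I J K n) (pth I J w t α0' α1')))) := by
  
  have hI0 : (0:ℝ) < I := by exact_mod_cast hI
  have hJ0 : (0:ℝ) < J := by exact_mod_cast hJ
  have hK0 : (0:ℝ) < K := by exact_mod_cast hK
  have hc : (0:ℝ) < (I : ℝ) * J := mul_pos hI0 hJ0
  have hdpd : ∀ α0 α1 : ℝ, dPD β (phat I J K n) (pth I J w t α0 α1) =
      ∑ i, ∑ j,
        ((Fcdf α0 α1 (w i) (t j) / ((I:ℝ) * J)) ^ (β + 1)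
          - (1 + 1 / β) * (Fcdf α0 α1 (w i) (t j) / ((I:ℝ) * J)) ^ β
              * ((n i j : ℝ) / ((I:ℝ) * J * K))
          + (1 / β) * ((n i j : ℝ) / ((I:ℝ) * J * K)) ^ (1 + β)
        + (((1 - Fcdf α0 α1 (w i) (t j)) / ((I:ℝ) * J)) ^ (β + 1)
          - (1 + 1 / β) * ((1 - Fcdf α0 α1 (w i) (t j)) / ((I:ℝ) * J)) ^ β
              * (((K:ℝ) - (n i j : ℝ)) / ((I:ℝ) * J * K))
          + (1 / β) * (((K:ℝ) - (n i j : ℝ)) / ((I:ℝ) * J * K)) ^ (1 + β))) := by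
    intro α0 α1
    rw [dPD, Fintype.sum_prod_type]
    refine Finset.sum_congr rfl fun i _ => ?_
    rw [Fintype.sum_prod_type]
    refine Finset.sum_congr rfl fun j _ => ?_
    rw [Fin.sum_univ_two]
    simp [phat, pth]
  have hid : ∀ α0 α1 : ℝ, 0 < α0 →
      (I * J : ℝ) * Dobj I J K w t n β α0 α1 =
        (I * J : ℝ) ^ (β + 1) * dPD β (phat I J K n) (pth I J w t α0 α1)
          - (1 / β) * ∑ i, ∑ j,
              (((n i j : ℝ) / K) ^ (1 + β) + (((K : ℝ) - (n i j : ℝ)) / K) ^ (1 + β)) := by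
    intro α0 α1 hα0
    have hmain : (I * J : ℝ) ^ (β + 1) * dPD β (phat I J K n) (pth I J w t α0 α1) =
        (∑ i, ∑ j,
          (Fcdf α0 α1 (w i) (t j) ^ (β + 1) + (1 - Fcdf α0 α1 (w i) (t j)) ^ (β + 1)
            - ((1 + β) / β) *
              (((n i j : ℝ) / K) * Fcdf α0 α1 (w i) (t j) ^ β
                + (((K : ℝ) - (n i j : ℝ)) / K) * (1 - Fcdf α0 α1 (w i) (t j)) ^ β)))
        + (1 / β) * ∑ i, ∑ j,
            (((n i j : ℝ) / K) ^ (1 + β) + (((K : ℝ) - (n i j : ℝ)) / K) ^ (1 + β)) := by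
      rw [hdpd]
      simp only [Finset.mul_sum]
      rw [← Finset.sum_add_distrib]
      refine Finset.sum_congr rfl fun i _ => ?_
      rw [← Finset.sum_add_distrib]
      refine Finset.sum_congr rfl fun j _ => ?_
      exact aux_key β ((I:ℝ) * J) K (Fcdf α0 α1 (w i) (t j)) (n i j) hβ hc hK0
        (aux_Fcdf_nonneg hα0 (ht j)) (aux_Fcdf_le_one _ _ _ _)
        (Nat.cast_nonneg _) (by exact_mod_cast hn i j)
    rw [Dobj, ← mul_assoc, mul_one_div, div_self hc.ne', one_mul]
    rw [hmain]
    ring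
  refine ⟨hid, fun α0 α1 hα0 => ?_⟩
  have hpow : (0:ℝ) < ((I:ℝ) * J) ^ (β + 1) := Real.rpow_pos_of_pos hc _
  constructor
  · intro h α0' α1' hα0'
    have h1 := hid α0 α1 hα0
    have h2 := hid α0' α1' hα0'
    have h3 := h α0' α1' hα0'
    have h4 : (I * J : ℝ) * Dobj I J K w t n β α0 α1 ≤
        (I * J : ℝ) * Dobj I J K w t n β α0' α1' :=
      mul_le_mul_of_nonneg_left h3 hc.le
    rw [h1, h2] at h4
    have h5 : ((I:ℝ) * J) ^ (β + 1) * dPD β (phat I J K n) (pth I J w t α0 α1) ≤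
        ((I:ℝ) * J) ^ (β + 1) * dPD β (phat I J K n) (pth I J w t α0' α1') := by linarith
    exact le_of_mul_le_mul_left h5 hpow
  · intro h α0' α1' hα0'
    have h1 := hid α0 α1 hα0
    have h2 := hid α0' α1' hα0'
    have h3 := h α0' α1' hα0'
    have h4 : (I * J : ℝ) * Dobj I J K w t n β α0 α1 ≤
        (I * J : ℝ) * Dobj I J K w t n β α0' α1' := by
      rw [h1, h2]
      have := mul_le_mul_of_nonneg_left h3 hpow.le
      linarith
    exact le_of_mul_le_mul_left h4 hc
end

section
/- Fix β > 0 and data n_{ij} ∈ {0,…,K}. For α = (α₀, α₁) with α₀ > 0, both partial derivatives of the map α ↦ d_β(p̂, p(α)) vanish at α if and only if the two estimating equations hold: Σ_{i=1}^I Σ_{j=1}^J (K·F_{ij}(α) − n_{ij})·f_{ij}(α)·t_j·[F_{ij}(α)^{β−1} + (1 − F_{ij}(α))^{β−1}] = 0 and Σ_{i=1}^I Σ_{j=1}^J (K·F_{ij}(α) − n_{ij})·f_{ij}(α)·t_j·w_i·[F_{ij}(α)^{β−1} + (1 − F_{ij}(α))^{β−1}] = 0. -/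
open Real BigOperators Finset

/-- Lifetime density in the one-shot device exponential model. -/
noncomputable def fpdf (α0 α1 w t : ℝ) : ℝ :=
  α0 * Real.exp (α1 * w) * Real.exp (-(α0 * Real.exp (α1 * w) * t))

/-- The DPD objective `α ↦ d_β(p̂, p(α))` as a function of the parameter. -/
noncomputable def dObj (I J K : ℕ) (w : Fin I → ℝ) (t : Fin J → ℝ)
    (n : Fin I → Fin J → ℕ) (β α0 α1 : ℝ) : ℝ :=
  dPD β (phat I J K n) (pth I J w t α0 α1)



section DPDhelpers

lemma Fcdf_pos' {α0 α1 w t : ℝ} (hα0 : 0 < α0) (ht : 0 < t) : 0 < Fcdf α0 α1 w t := by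
  have hs : 0 < α0 * Real.exp (α1 * w) * t := by positivity
  have : Real.exp (-(α0 * Real.exp (α1 * w) * t)) < 1 := by
    rw [Real.exp_lt_one_iff]; linarith
  simp only [Fcdf]; linarith

lemma Fcdf_lt_one' (α0 α1 w t : ℝ) : Fcdf α0 α1 w t < 1 := by
  have := Real.exp_pos (-(α0 * Real.exp (α1 * w) * t))
  simp only [Fcdf]; linarith

lemma hasDerivAt_Fcdf_fst (α0 α1 w t : ℝ) :
    HasDerivAt (fun a => Fcdf a α1 w t)
      (Real.exp (α1 * w) * t * Real.exp (-(α0 * Real.exp (α1 * w) * t))) α0 := by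
  have h : HasDerivAt (fun a : ℝ => -(a * Real.exp (α1 * w) * t))
      (-(Real.exp (α1 * w) * t)) α0 := by
    simpa using (((hasDerivAt_id α0).mul_const (Real.exp (α1 * w))).mul_const t).fun_neg
  have h2 := (h.exp).const_sub 1
  simp only [Fcdf]
  convert h2 using 1
  · rfl
  · rfl
  ring

lemma hasDerivAt_Fcdf_snd (α0 α1 w t : ℝ) :
    HasDerivAt (fun a => Fcdf α0 a w t)
      (α0 * Real.exp (α1 * w) * Real.exp (-(α0 * Real.exp (α1 * w) * t)) * t * w) α1 := by
  have h0 : HasDerivAt (fun a : ℝ => a * w) w α1 := by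
    simpa using (hasDerivAt_id α1).mul_const w
  have h1 : HasDerivAt (fun a : ℝ => -(α0 * Real.exp (a * w) * t))
      (-(α0 * (Real.exp (α1 * w) * w) * t)) α1 :=
    (((h0.exp).const_mul α0).mul_const t).neg
  have h2 := (h1.exp).const_sub 1
  simp only [Fcdf]
  convert h2 using 1
  · rfl
  · rfl
  ring

lemma term_hasDerivAt {β : ℝ} (hβ : 0 < β) (p : ℝ) {q : ℝ → ℝ} {q' x : ℝ}
    (hq : HasDerivAt q q' x) (hx : 0 < q x) :
    HasDerivAt (fun a => q a ^ (β+1) - (1+1/β) * q a ^ β * p + (1/β) * p ^ (1+β))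
      ((β+1) * q x ^ (β-1) * (q x - p) * q') x := by
  have h1 : HasDerivAt (fun a => q a ^ (β+1)) (q' * (β+1) * q x ^ (β+1-1)) x :=
    hq.rpow_const (Or.inl hx.ne')
  have h2 : HasDerivAt (fun a => q a ^ β) (q' * β * q x ^ (β-1)) x :=
    hq.rpow_const (Or.inl hx.ne')
  have h3 := (h1.sub ((h2.mul_const p).const_mul (1+1/β))).add_const ((1/β) * p ^ (1+β))
  convert h3 using 1
  · rfl
  · rfl
  · funext a; simp only [Pi.sub_apply]; ring
  · have hb : q x ^ β = q x ^ (β-1) * q x := by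
      have := Real.rpow_add_one hx.ne' (β-1)
      rwa [sub_add_cancel] at this
    rw [add_sub_cancel_right, hb]
    field_simp

lemma pair_hasDerivAt {β : ℝ} (hβ : 0 < β) {c Kr : ℝ} (hc : 0 < c) (hK : 0 < Kr)
    (nij : ℝ) {F : ℝ → ℝ} {F' x : ℝ} (hF : HasDerivAt F F' x)
    (h0 : 0 < F x) (h1 : F x < 1) :
    HasDerivAt (fun a =>
      ((F a / c) ^ (β+1) - (1+1/β) * (F a / c) ^ β * (nij/(c*Kr)) + (1/β) * (nij/(c*Kr)) ^ (1+β))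
      + (((1 - F a) / c) ^ (β+1) - (1+1/β) * ((1 - F a) / c) ^ β * ((Kr-nij)/(c*Kr)) + (1/β) * ((Kr-nij)/(c*Kr)) ^ (1+β)))
      ((β+1) / (c ^ (β+1) * Kr) * ((Kr * F x - nij) * F' * (F x ^ (β-1) + (1 - F x) ^ (β-1)))) x := by
  have hq0 : HasDerivAt (fun a => F a / c) (F'/c) x := hF.div_const c
  have hq1 : HasDerivAt (fun a => (1 - F a) / c) (-F'/c) x := by
    simpa [neg_div] using (hF.const_sub 1).div_const c
  have hx0 : 0 < F x / c := div_pos h0 hc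
  have hx1 : 0 < (1 - F x) / c := div_pos (by linarith) hc
  have h := (term_hasDerivAt hβ (nij/(c*Kr)) hq0 hx0).add
    (term_hasDerivAt hβ ((Kr-nij)/(c*Kr)) hq1 hx1)
  convert h using 1
  · rfl
  · rfl
  · rfl
  have e0 : (F x / c) ^ (β-1) = F x ^ (β-1) / c ^ (β-1) := Real.div_rpow h0.le hc.le _
  have e1 : ((1 - F x) / c) ^ (β-1) = (1 - F x) ^ (β-1) / c ^ (β-1) :=
    Real.div_rpow (by linarith) hc.le _
  have ec : c ^ (β+1) = c ^ (β-1) * c * c := by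
    rw [Real.rpow_add_one hc.ne' β]
    congr 1
    have := Real.rpow_add_one hc.ne' (β-1)
    rwa [sub_add_cancel] at this
  rw [e0, e1, ec]
  have hcβ : c ^ (β-1) ≠ 0 := (Real.rpow_pos_of_pos hc _).ne'
  field_simp
  ring

end DPDhelpers

/-- the two partial derivatives of `α ↦ d_β(p̂, p(α))` vanish at `α`
if and only if the estimating equations (5) and (5B) hold. -/
theorem dpd_critical_iff_estimating_equations
    (I J K : ℕ) (hI : 1 ≤ I) (hJ : 1 ≤ J) (hK : 1 ≤ K)
    (w : Fin I → ℝ) (t : Fin J → ℝ) (hw : ∀ i, 0 < w i) (ht : ∀ j, 0 < t j)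
    (n : Fin I → Fin J → ℕ) (hn : ∀ i j, n i j ≤ K)
    (β : ℝ) (hβ : 0 < β) (α0 α1 : ℝ) (hα0 : 0 < α0) :
    (deriv (fun a : ℝ => dObj I J K w t n β a α1) α0 = 0
      ∧ deriv (fun a : ℝ => dObj I J K w t n β α0 a) α1 = 0)
    ↔
    ((∑ i, ∑ j,
        ((K : ℝ) * Fcdf α0 α1 (w i) (t j) - (n i j : ℝ)) * fpdf α0 α1 (w i) (t j) * t j *
          (Fcdf α0 α1 (w i) (t j) ^ (β - 1) + (1 - Fcdf α0 α1 (w i) (t j)) ^ (β - 1))) = 0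
      ∧
     (∑ i, ∑ j,
        ((K : ℝ) * Fcdf α0 α1 (w i) (t j) - (n i j : ℝ)) * fpdf α0 α1 (w i) (t j) * t j * w i *
          (Fcdf α0 α1 (w i) (t j) ^ (β - 1) + (1 - Fcdf α0 α1 (w i) (t j)) ^ (β - 1))) = 0) := by
  
  have hIpos : (0:ℝ) < (I:ℝ) := by exact_mod_cast Nat.lt_of_lt_of_le Nat.zero_lt_one hI
  have hJpos : (0:ℝ) < (J:ℝ) := by exact_mod_cast Nat.lt_of_lt_of_le Nat.zero_lt_one hJ
  have hKr : (0:ℝ) < (K:ℝ) := by exact_mod_cast Nat.lt_of_lt_of_le Nat.zero_lt_one hK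
  have hc : (0:ℝ) < (I:ℝ)*(J:ℝ) := mul_pos hIpos hJpos
  have hcp : (0:ℝ) < ((I:ℝ)*(J:ℝ)) ^ (β+1) := Real.rpow_pos_of_pos hc _
  have hC1 : ((β+1) / (((I:ℝ)*(J:ℝ)) ^ (β+1) * (K:ℝ)) / α0) ≠ 0 := by positivity
  have hC2 : ((β+1) / (((I:ℝ)*(J:ℝ)) ^ (β+1) * (K:ℝ))) ≠ 0 := by positivity
  have hrw0 : (fun a => dObj I J K w t n β a α1) = (fun a : ℝ => ∑ i : Fin I, ∑ j : Fin J,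
      ((((Fcdf a α1 (w i) (t j)) / ((I:ℝ)*(J:ℝ))) ^ (β+1)
        - (1+1/β) * ((Fcdf a α1 (w i) (t j)) / ((I:ℝ)*(J:ℝ))) ^ β * ((n i j : ℝ)/(((I:ℝ)*(J:ℝ))*(K:ℝ)))
        + (1/β) * ((n i j : ℝ)/(((I:ℝ)*(J:ℝ))*(K:ℝ))) ^ (1+β))
      + (((1 - Fcdf a α1 (w i) (t j)) / ((I:ℝ)*(J:ℝ))) ^ (β+1)
        - (1+1/β) * ((1 - Fcdf a α1 (w i) (t j)) / ((I:ℝ)*(J:ℝ))) ^ β * (((K:ℝ)-(n i j : ℝ))/(((I:ℝ)*(J:ℝ))*(K:ℝ)))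
        + (1/β) * (((K:ℝ)-(n i j : ℝ))/(((I:ℝ)*(J:ℝ))*(K:ℝ))) ^ (1+β)))) := by
    funext a
    simp only [dObj, dPD, pth, phat, Fintype.sum_prod_type, Fin.sum_univ_two]
    norm_num
  have hrw1 : (fun a => dObj I J K w t n β α0 a) = (fun a : ℝ => ∑ i : Fin I, ∑ j : Fin J,
      ((((Fcdf α0 a (w i) (t j)) / ((I:ℝ)*(J:ℝ))) ^ (β+1)
        - (1+1/β) * ((Fcdf α0 a (w i) (t j)) / ((I:ℝ)*(J:ℝ))) ^ β * ((n i j : ℝ)/(((I:ℝ)*(J:ℝ))*(K:ℝ)))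
        + (1/β) * ((n i j : ℝ)/(((I:ℝ)*(J:ℝ))*(K:ℝ))) ^ (1+β))
      + (((1 - Fcdf α0 a (w i) (t j)) / ((I:ℝ)*(J:ℝ))) ^ (β+1)
        - (1+1/β) * ((1 - Fcdf α0 a (w i) (t j)) / ((I:ℝ)*(J:ℝ))) ^ β * (((K:ℝ)-(n i j : ℝ))/(((I:ℝ)*(J:ℝ))*(K:ℝ)))
        + (1/β) * (((K:ℝ)-(n i j : ℝ))/(((I:ℝ)*(J:ℝ))*(K:ℝ))) ^ (1+β)))) := by
    funext a
    simp only [dObj, dPD, pth, phat, Fintype.sum_prod_type, Fin.sum_univ_two]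
    norm_num
  have key0 : HasDerivAt (fun a => dObj I J K w t n β a α1)
      (∑ i : Fin I, ∑ j : Fin J, ((β+1) / (((I:ℝ)*(J:ℝ)) ^ (β+1) * (K:ℝ)) / α0) *
        (((K : ℝ) * Fcdf α0 α1 (w i) (t j) - (n i j : ℝ)) * fpdf α0 α1 (w i) (t j) * t j *
          (Fcdf α0 α1 (w i) (t j) ^ (β - 1) + (1 - Fcdf α0 α1 (w i) (t j)) ^ (β - 1)))) α0 := by
    rw [hrw0]
    apply HasDerivAt.fun_sum
    intro i _
    apply HasDerivAt.fun_sum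
    intro j _
    have hp := pair_hasDerivAt hβ hc hKr ((n i j : ℝ))
      (hasDerivAt_Fcdf_fst α0 α1 (w i) (t j)) (Fcdf_pos' hα0 (ht j)) (Fcdf_lt_one' α0 α1 (w i) (t j))
    convert hp using 1
    · rfl
    · rfl
    simp only [fpdf]
    field_simp
  have key1 : HasDerivAt (fun a => dObj I J K w t n β α0 a)
      (∑ i : Fin I, ∑ j : Fin J, ((β+1) / (((I:ℝ)*(J:ℝ)) ^ (β+1) * (K:ℝ))) *
        (((K : ℝ) * Fcdf α0 α1 (w i) (t j) - (n i j : ℝ)) * fpdf α0 α1 (w i) (t j) * t j * w i *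
          (Fcdf α0 α1 (w i) (t j) ^ (β - 1) + (1 - Fcdf α0 α1 (w i) (t j)) ^ (β - 1)))) α1 := by
    rw [hrw1]
    apply HasDerivAt.fun_sum
    intro i _
    apply HasDerivAt.fun_sum
    intro j _
    have hp := pair_hasDerivAt hβ hc hKr ((n i j : ℝ))
      (hasDerivAt_Fcdf_snd α0 α1 (w i) (t j)) (Fcdf_pos' hα0 (ht j)) (Fcdf_lt_one' α0 α1 (w i) (t j))
    convert hp using 1
    · rfl
    · rfl
    simp only [fpdf]
    ring
  have d0 := key0.deriv
  have d1 := key1.deriv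
  rw [d0, d1]
  simp_rw [← Finset.mul_sum]
  constructor
  · rintro ⟨h1, h2⟩
    exact ⟨by rcases mul_eq_zero.mp h1 with h | h; exact absurd h hC1; exact h,
           by rcases mul_eq_zero.mp h2 with h | h; exact absurd h hC2; exact h⟩
  · rintro ⟨h1, h2⟩
    exact ⟨by rw [h1, mul_zero], by rw [h2, mul_zero]⟩
end
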